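/- Let c > 0, c̃₁, c̃₂ > 0 and l > 0. The exponential equation (c − c̃₁ − c̃₂) e^{ikl/c} + (c + c̃₁ + c̃₂) e^{−ikl/c} = 0 has, for each R > 0, a number of solutions k with |k| < R equal to (2l/(πc))·R + O(1) as R → ∞ if c ≠ c̃₁ + c̃₂, and has no solutions at all if c = c̃₁ + c̃₂. -/

import Mathlib

open Complex

/-- For the weighted graph with one internal edge and two leads, the equation
`(c − c̃₁ − c̃₂)e^{ikl/c} + (c + c̃₁ + c̃₂)e^{−ikl/c} = 0` has `(2l/(πc))R + O(1)`
solutions with `|k| < R` if `c ≠ c̃₁ + c̃₂`, and no solutions if `c = c̃₁ + c̃₂`. -/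
theorem stmt12 (c c₁ c₂ l : ℝ) (hc : 0 < c) (hc₁ : 0 < c₁) (hc₂ : 0 < c₂)
    (hl : 0 < l) :
    (c ≠ c₁ + c₂ →
      ∃ C : ℝ, ∀ R : ℝ, 1 ≤ R →
        |({k : ℂ | ((c : ℂ) - c₁ - c₂) * Complex.exp (Complex.I * k * l / c)
              + ((c : ℂ) + c₁ + c₂) * Complex.exp (-(Complex.I * k * l / c)) = 0
            ∧ ‖k‖ < R}.ncard : ℝ) - (2 * l / (Real.pi * c)) * R| ≤ C) ∧
    (c = c₁ + c₂ →
      ∀ k : ℂ, ((c : ℂ) - c₁ - c₂) * Complex.exp (Complex.I * k * l / c)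
          + ((c : ℂ) + c₁ + c₂) * Complex.exp (-(Complex.I * k * l / c)) ≠ 0) := by
  have hcC : (c : ℂ) ≠ 0 := by exact_mod_cast hc.ne'
  have hlC : (l : ℂ) ≠ 0 := by exact_mod_cast hl.ne'
  have hB : ((c : ℂ) + c₁ + c₂) ≠ 0 := by
    have : (0:ℝ) < c + c₁ + c₂ := by linarith
    exact_mod_cast this.ne'
  have hπ : 0 < Real.pi := Real.pi_pos
  constructor
  · intro hne
    have hA : ((c : ℂ) - c₁ - c₂) ≠ 0 := by
      intro h
      apply hne
      have : ((c : ℂ)) = ((c₁ + c₂ : ℝ) : ℂ) := by push_cast; linear_combination h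
      exact_mod_cast this
    set w : ℂ := -(((c : ℂ) + c₁ + c₂) / ((c : ℂ) - c₁ - c₂)) with hw
    have hw0 : w ≠ 0 := by
      simp only [hw, neg_ne_zero, div_ne_zero_iff]
      exact ⟨hB, hA⟩
    set D : ℝ := Real.pi * c / l with hDdef
    have hD : 0 < D := by positivity
    set a : ℂ := -I * Complex.log w * c / (2 * l) with ha
    -- characterization of solutions
    have hsol : ∀ k : ℂ, (((c : ℂ) - c₁ - c₂) * Complex.exp (Complex.I * k * l / c)
        + ((c : ℂ) + c₁ + c₂) * Complex.exp (-(Complex.I * k * l / c)) = 0)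
        ↔ ∃ n : ℤ, k = a + (D : ℂ) * n := by
      intro k
      have e0 : Complex.exp (Complex.I * k * l / c) ≠ 0 := Complex.exp_ne_zero _
      have step1 : (((c : ℂ) - c₁ - c₂) * Complex.exp (Complex.I * k * l / c)
          + ((c : ℂ) + c₁ + c₂) * Complex.exp (-(Complex.I * k * l / c)) = 0)
          ↔ Complex.exp (2 * (Complex.I * k * l / c)) = w := by
        rw [Complex.exp_neg, show Complex.exp (2 * (Complex.I * k * l / c))
            = Complex.exp (Complex.I * k * l / c) * Complex.exp (Complex.I * k * l / c) by
          rw [← Complex.exp_add]; ring_nf]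
        rw [hw]
        constructor
        · intro h
          field_simp
          field_simp at h
          linear_combination h
        · intro h
          field_simp at h ⊢
          linear_combination h
      rw [step1, show w = Complex.exp (Complex.log w) from (Complex.exp_log hw0).symm,
        Complex.exp_eq_exp_iff_exists_int]
      constructor
      · rintro ⟨n, hn⟩
        refine ⟨n, ?_⟩
        have h2 : (2 * (Complex.I * k * l / c)) * ((-I) * (c : ℂ) / (2 * l)) = k := by
          field_simp
          linear_combination (-k) * Complex.I_mul_I
        rw [show k = (2 * (Complex.I * k * l / c)) * ((-I) * (c : ℂ) / (2 * l)) from h2.symm,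
          hn, ha]
        push_cast [hDdef]
        field_simp
        linear_combination (-(2*(n:ℂ)*Real.pi)) * Complex.I_mul_I
      · rintro ⟨n, rfl⟩
        refine ⟨n, ?_⟩
        rw [ha]
        push_cast [hDdef]
        field_simp
        linear_combination (-(Complex.log w)) * Complex.I_mul_I
    -- the constant
    refine ⟨2 * ‖a‖ / D + 1, ?_⟩
    intro R hR
    set T : Set ℤ := {n : ℤ | ‖a + (D : ℂ) * n‖ < R} with hT
    have hinj : Function.Injective (fun n : ℤ => a + (D : ℂ) * n) := by
      intro m n h
      have h2 : ((D : ℂ)) * m = (D : ℂ) * n := add_left_cancel h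
      have hDC : (D : ℂ) ≠ 0 := by exact_mod_cast hD.ne'
      have : (m : ℂ) = n := mul_left_cancel₀ hDC h2
      exact_mod_cast this
    have hseteq : {k : ℂ | ((c : ℂ) - c₁ - c₂) * Complex.exp (Complex.I * k * l / c)
              + ((c : ℂ) + c₁ + c₂) * Complex.exp (-(Complex.I * k * l / c)) = 0
            ∧ ‖k‖ < R} = (fun n : ℤ => a + (D : ℂ) * n) '' T := by
      ext k
      constructor
      · rintro ⟨heq, hlt⟩
        obtain ⟨n, rfl⟩ := (hsol k).1 heq
        exact ⟨n, hlt, rfl⟩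
      · rintro ⟨n, hn, rfl⟩
        exact ⟨(hsol _).2 ⟨n, rfl⟩, hn⟩
    rw [hseteq, Set.ncard_image_of_injective T hinj]
    set x : ℝ := a.re with hx
    set m : ℤ := ⌈(-R - x) / D⌉ with hm
    set M : ℤ := ⌊(R - x) / D⌋ with hM
    have hsubU : T ⊆ Set.Icc m M := by
      intro n hn
      have hre : (a + (D : ℂ) * n).re = x + D * n := by
        simp [hx]
      have h1 : |x + D * n| < R := by
        calc |x + D * n| = |(a + (D : ℂ) * n).re| := by rw [hre]
          _ ≤ ‖a + (D : ℂ) * n‖ := Complex.abs_re_le_norm _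
          _ < R := hn
      rw [abs_lt] at h1
      constructor
      · rw [hm, Int.ceil_le]
        rw [div_le_iff₀ hD]
        linarith [h1.1]
      · rw [hM, Int.le_floor]
        rw [le_div_iff₀ hD]
        linarith [h1.2]
    have hTfin : T.Finite := (Set.finite_Icc m M).subset hsubU
    set v : ℝ := (R - ‖a‖) / D with hv
    set m' : ℤ := ⌊-v⌋ + 1 with hm'
    set M' : ℤ := ⌈v⌉ - 1 with hM'
    have hsubL : Set.Icc m' M' ⊆ T := by
      intro n hn
      obtain ⟨h1, h2⟩ := hn
      have hn1 : -v < (n : ℝ) := by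
        have : ⌊-v⌋ < n := by omega
        exact (Int.floor_lt).1 this
      have hn2 : (n : ℝ) < v := by
        have : n < ⌈v⌉ := by omega
        exact (Int.lt_ceil).1 this
      have habs : |(n : ℝ)| < v := abs_lt.2 ⟨by linarith, hn2⟩
      have : ‖a + (D : ℂ) * n‖ ≤ ‖a‖ + D * |(n : ℝ)| := by
        calc ‖a + (D : ℂ) * n‖ ≤ ‖a‖ + ‖(D : ℂ) * n‖ :=
              norm_add_le _ _
          _ = ‖a‖ + D * |(n : ℝ)| := by
              rw [norm_mul]
              congr 1
              rw [Complex.norm_real, Real.norm_eq_abs, abs_of_pos hD]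
              congr 1
              rw [show ((n : ℤ) : ℂ) = ((n : ℝ) : ℂ) by push_cast; ring, Complex.norm_real, Real.norm_eq_abs]
      have hvD : D * v = R - ‖a‖ := by
        rw [hv]; field_simp
      have : ‖a + (D : ℂ) * n‖ < R := by
        have h3 : D * |(n : ℝ)| < D * v := by
          exact mul_lt_mul_of_pos_left habs hD
        calc ‖a + (D : ℂ) * n‖ ≤ ‖a‖ + D * |(n : ℝ)| := this
          _ < ‖a‖ + D * v := by linarith
          _ = R := by rw [hvD]; ring
      exact this
    -- cardinality bounds
    have hup : (T.ncard : ℝ) ≤ 2 * R / D + 1 := by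
      have h1 : T.ncard ≤ (Set.Icc m M).ncard := Set.ncard_le_ncard hsubU (Set.finite_Icc m M)
      have h2 : (Set.Icc m M).ncard = (M + 1 - m).toNat := by
        rw [← Finset.coe_Icc, Set.ncard_coe_finset, Int.card_Icc]
      rw [h2] at h1
      have h3 : (T.ncard : ℝ) ≤ ((M + 1 - m).toNat : ℝ) := by exact_mod_cast h1
      rcases le_or_gt (M + 1 - m) 0 with h | h
      · have : ((M + 1 - m).toNat : ℝ) = 0 := by
          have := Int.toNat_of_nonpos h
          exact_mod_cast this
        rw [this] at h3
        have : 0 ≤ 2 * R / D := by positivity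
        linarith
      · have h4 : ((M + 1 - m).toNat : ℝ) = ((M : ℝ) + 1 - m) := by
          have : ((M + 1 - m).toNat : ℤ) = M + 1 - m := Int.toNat_of_nonneg h.le
          exact_mod_cast this
        rw [h4] at h3
        have h5 : (M : ℝ) ≤ (R - x) / D := Int.floor_le _
        have h6 : (-R - x) / D ≤ (m : ℝ) := Int.le_ceil _
        have h7 : (R - x) / D - (-R - x) / D = 2 * R / D := by field_simp; ring
        linarith
    have hlo : 2 * R / D - 2 * ‖a‖ / D - 1 ≤ (T.ncard : ℝ) := by
      have h1 : (Set.Icc m' M').ncard ≤ T.ncard := Set.ncard_le_ncard hsubL hTfin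
      have h2 : (Set.Icc m' M').ncard = (M' + 1 - m').toNat := by
        rw [← Finset.coe_Icc, Set.ncard_coe_finset, Int.card_Icc]
      rw [h2] at h1
      have h3 : ((M' + 1 - m').toNat : ℝ) ≤ (T.ncard : ℝ) := by exact_mod_cast h1
      have h4 : ((M' + 1 - m') : ℝ) ≤ ((M' + 1 - m').toNat : ℝ) := by
        exact_mod_cast Int.self_le_toNat _
      have h5 : v - 1 ≤ (M' : ℝ) := by
        have := Int.le_ceil v
        push_cast [hM']
        linarith
      have h6 : (m' : ℝ) ≤ -v + 1 := by
        have := Int.floor_le (-v)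
        push_cast [hm']
        linarith
      have h7 : 2 * v - 1 ≤ ((M' + 1 - m') : ℝ) := by push_cast; linarith
      have h8 : v = R / D - ‖a‖ / D := by rw [hv]; field_simp
      have h9 : 2 * v - 1 = 2 * R / D - 2 * ‖a‖ / D - 1 := by rw [h8]; ring
      linarith
    have hcoef : 2 * l / (Real.pi * c) * R = 2 * R / D := by
      rw [hDdef]; field_simp
    rw [hcoef, abs_le]
    constructor
    · have : 0 ≤ 2 * ‖a‖ / D := by positivity
      linarith
    · have : 0 ≤ 2 * ‖a‖ / D := by positivity
      linarith
  · intro heq k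
    have h0 : (c : ℂ) - c₁ - c₂ = 0 := by
      rw [heq]; push_cast; ring
    rw [h0, zero_mul, zero_add]
    exact mul_ne_zero hB (Complex.exp_ne_zero _)
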